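/- Let f be bounded by B and define T̂_0 = (1/n²)Σ_{i,j} f(X_i,Y_j) with i.i.d. pairs (X_i,Y_i) ∼ P_{XY}. Then |E[T̂_0²] − T_0²| ≤ (6/n − 11/n² + 6/n³)·B², where T_0 = E_{P_X×P_Y} f(X,Y). -/

import Mathlib

open MeasureTheory ProbabilityTheory Finset

private lemma sum_indicator_notmem' {n : ℕ} (s : Finset (Fin n)) :
    ∑ r : Fin n, (if r ∉ s then (1:ℝ) else 0) = (n:ℝ) - s.card := by
  rw [Finset.sum_boole]
  have h1 : Finset.univ.filter (fun r : Fin n => r ∉ s) = Finset.univ \ s := by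
    ext r; simp
  have hle : s.card ≤ n := by
    simpa [Finset.card_univ] using Finset.card_le_univ s
  rw [h1, Finset.card_sdiff_of_subset (Finset.subset_univ _), Finset.card_univ, Fintype.card_fin,
    Nat.cast_sub hle]

private lemma count4' (n : ℕ) :
    ∑ i : Fin n, ∑ j : Fin n, ∑ q : Fin n, ∑ r : Fin n,
      (if i ≠ j ∧ q ≠ i ∧ q ≠ j ∧ r ≠ i ∧ r ≠ j ∧ r ≠ q then (1:ℝ) else 0)
    = (n:ℝ) * ((n:ℝ)-1) * ((n:ℝ)-2) * ((n:ℝ)-3) := by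
  classical
  have h1 : ∀ i j q : Fin n, i ≠ j → q ≠ i → q ≠ j →
      ∑ r : Fin n, (if r ≠ i ∧ r ≠ j ∧ r ≠ q then (1:ℝ) else 0) = (n:ℝ) - 3 := by
    intro i j q hij hqi hqj
    have hcond : ∀ r : Fin n, (r ≠ i ∧ r ≠ j ∧ r ≠ q) ↔ r ∉ ({i, j, q} : Finset (Fin n)) := by
      intro r; simp [not_or]
    have hcard : ({i, j, q} : Finset (Fin n)).card = 3 := by
      rw [Finset.card_insert_of_notMem (by simp [hij, hqi.symm]),
        Finset.card_insert_of_notMem (by simp [hqj.symm]), Finset.card_singleton]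
    calc ∑ r : Fin n, (if r ≠ i ∧ r ≠ j ∧ r ≠ q then (1:ℝ) else 0)
        = ∑ r : Fin n, (if r ∉ ({i,j,q} : Finset (Fin n)) then (1:ℝ) else 0) := by
          refine Finset.sum_congr rfl fun r _ => ?_
          simp only [hcond]
      _ = (n:ℝ) - 3 := by rw [sum_indicator_notmem', hcard]; norm_num
  have h2 : ∀ i j : Fin n, i ≠ j →
      ∑ q : Fin n, (if q ≠ i ∧ q ≠ j then ((n:ℝ) - 3) else 0)
        = ((n:ℝ)-2) * ((n:ℝ)-3) := by
    intro i j hij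
    have hcond : ∀ q : Fin n, (q ≠ i ∧ q ≠ j) ↔ q ∉ ({i, j} : Finset (Fin n)) := by
      intro q; simp [not_or]
    have hcard : ({i, j} : Finset (Fin n)).card = 2 := by
      rw [Finset.card_insert_of_notMem (by simp [hij]), Finset.card_singleton]
    calc ∑ q : Fin n, (if q ≠ i ∧ q ≠ j then ((n:ℝ)-3) else 0)
        = ∑ q : Fin n, (if q ∉ ({i,j} : Finset (Fin n)) then (1:ℝ) else 0) * ((n:ℝ)-3) := by
          refine Finset.sum_congr rfl fun q _ => ?_
          simp only [hcond]
          split_ifs <;> ring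
      _ = ((n:ℝ)-2) * ((n:ℝ)-3) := by
          rw [← Finset.sum_mul, sum_indicator_notmem', hcard]; norm_num
  have h3 : ∀ i : Fin n,
      ∑ j : Fin n, (if i ≠ j then ((n:ℝ)-2) * ((n:ℝ)-3) else 0)
        = ((n:ℝ)-1) * (((n:ℝ)-2) * ((n:ℝ)-3)) := by
    intro i
    have hcond : ∀ j : Fin n, (i ≠ j) ↔ j ∉ ({i} : Finset (Fin n)) := by
      intro j; simp [ne_comm]
    calc ∑ j : Fin n, (if i ≠ j then ((n:ℝ)-2) * ((n:ℝ)-3) else 0)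
        = ∑ j : Fin n, (if j ∉ ({i} : Finset (Fin n)) then (1:ℝ) else 0) * (((n:ℝ)-2)*((n:ℝ)-3)) := by
          refine Finset.sum_congr rfl fun j _ => ?_
          simp only [← hcond]
          split_ifs <;> ring
      _ = ((n:ℝ)-1) * (((n:ℝ)-2) * ((n:ℝ)-3)) := by
          rw [← Finset.sum_mul, sum_indicator_notmem', Finset.card_singleton]; norm_num
  have step : ∀ i j : Fin n,
      ∑ q : Fin n, ∑ r : Fin n,
        (if i ≠ j ∧ q ≠ i ∧ q ≠ j ∧ r ≠ i ∧ r ≠ j ∧ r ≠ q then (1:ℝ) else 0)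
      = if i ≠ j then ((n:ℝ)-2) * ((n:ℝ)-3) else 0 := by
    intro i j
    by_cases hij : i ≠ j
    · rw [if_pos hij, ← h2 i j hij]
      refine Finset.sum_congr rfl fun q _ => ?_
      by_cases hq : q ≠ i ∧ q ≠ j
      · rw [if_pos hq, ← h1 i j q hij hq.1 hq.2]
        refine Finset.sum_congr rfl fun r _ => ?_
        by_cases hr : r ≠ i ∧ r ≠ j ∧ r ≠ q
        · rw [if_pos hr, if_pos ⟨hij, hq.1, hq.2, hr⟩]
        · rw [if_neg hr, if_neg (by tauto)]
      · rw [if_neg hq]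
        refine Finset.sum_eq_zero fun r _ => ?_
        rw [if_neg (by tauto)]
    · rw [if_neg hij]
      refine Finset.sum_eq_zero fun q _ => Finset.sum_eq_zero fun r _ => ?_
      rw [if_neg (by tauto)]
  calc (∑ i : Fin n, ∑ j : Fin n, ∑ q : Fin n, ∑ r : Fin n,
      (if i ≠ j ∧ q ≠ i ∧ q ≠ j ∧ r ≠ i ∧ r ≠ j ∧ r ≠ q then (1:ℝ) else 0))
      = ∑ i : Fin n, ∑ j : Fin n, (if i ≠ j then ((n:ℝ)-2) * ((n:ℝ)-3) else 0) := by
        refine Finset.sum_congr rfl fun i _ => Finset.sum_congr rfl fun j _ => step i j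
    _ = ∑ i : Fin n, ((n:ℝ)-1) * (((n:ℝ)-2) * ((n:ℝ)-3)) := by
        refine Finset.sum_congr rfl fun i _ => h3 i
    _ = (n:ℝ) * ((n:ℝ)-1) * ((n:ℝ)-2) * ((n:ℝ)-3) := by
        rw [Finset.sum_const, Finset.card_univ, Fintype.card_fin, nsmul_eq_mul]; ring

private lemma quad_count' (n : ℕ) (A C : ℝ) :
    ∑ i : Fin n, ∑ j : Fin n, ∑ q : Fin n, ∑ r : Fin n,
      (if i ≠ j ∧ q ≠ i ∧ q ≠ j ∧ r ≠ i ∧ r ≠ j ∧ r ≠ q then A else C)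
    = ((n:ℝ)*((n:ℝ)-1)*((n:ℝ)-2)*((n:ℝ)-3)) * A
      + ((n:ℝ)^4 - (n:ℝ)*((n:ℝ)-1)*((n:ℝ)-2)*((n:ℝ)-3)) * C := by
  classical
  have hsplit : ∀ (P : Prop) [Decidable P],
      (if P then A else C) = C + (A - C) * (if P then (1:ℝ) else 0) := by
    intro P _; split_ifs <;> ring
  have hC : ∑ i : Fin n, ∑ j : Fin n, ∑ q : Fin n, ∑ r : Fin n, C = (n:ℝ)^4 * C := by
    simp only [Finset.sum_const, Finset.card_univ, Fintype.card_fin, nsmul_eq_mul]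
    ring
  calc (∑ i : Fin n, ∑ j : Fin n, ∑ q : Fin n, ∑ r : Fin n,
      (if i ≠ j ∧ q ≠ i ∧ q ≠ j ∧ r ≠ i ∧ r ≠ j ∧ r ≠ q then A else C))
      = ∑ i : Fin n, ∑ j : Fin n, ∑ q : Fin n, ∑ r : Fin n,
          (C + (A - C) * (if i ≠ j ∧ q ≠ i ∧ q ≠ j ∧ r ≠ i ∧ r ≠ j ∧ r ≠ q then (1:ℝ) else 0)) := by
        refine Finset.sum_congr rfl fun i _ => Finset.sum_congr rfl fun j _ =>
          Finset.sum_congr rfl fun q _ => Finset.sum_congr rfl fun r _ => hsplit _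
    _ = (∑ i : Fin n, ∑ j : Fin n, ∑ q : Fin n, ∑ r : Fin n, C)
        + (A - C) * ∑ i : Fin n, ∑ j : Fin n, ∑ q : Fin n, ∑ r : Fin n,
            (if i ≠ j ∧ q ≠ i ∧ q ≠ j ∧ r ≠ i ∧ r ≠ j ∧ r ≠ q then (1:ℝ) else 0) := by
        simp only [Finset.sum_add_distrib, ← Finset.mul_sum]
    _ = (n:ℝ)^4 * C + (A - C) * ((n:ℝ) * ((n:ℝ)-1) * ((n:ℝ)-2) * ((n:ℝ)-3)) := by
        rw [hC, count4' n]
    _ = _ := by ring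

private lemma sq_integral_le' {Ω : Type*} [MeasurableSpace Ω] (μ : Measure Ω)
    [IsProbabilityMeasure μ] (W : Ω → ℝ) (hW : Integrable W μ)
    (hW2 : Integrable (fun ω => (W ω)^2) μ) :
    (∫ ω, W ω ∂μ) ^ 2 ≤ ∫ ω, (W ω) ^ 2 ∂μ := by
  set c := ∫ ω, W ω ∂μ with hc
  have h0 : 0 ≤ ∫ ω, (W ω - c) ^ 2 ∂μ := integral_nonneg fun ω => sq_nonneg _
  have hexp : ∫ ω, (W ω - c) ^ 2 ∂μ = (∫ ω, (W ω) ^ 2 ∂μ) - c ^ 2 := by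
    have e1 : ∫ ω, (W ω - c) ^ 2 ∂μ
        = ∫ ω, ((W ω) ^ 2 - (2 * c) * W ω) + c ^ 2 ∂μ := by
      congr 1; funext ω; ring
    have e2 := integral_add (μ := μ) (f := fun ω => (W ω) ^ 2 - (2 * c) * W ω)
      (g := fun _ => c ^ 2) (hW2.sub (hW.const_mul (2*c))) (integrable_const _)
    have e3 := integral_sub (μ := μ) (f := fun ω => (W ω) ^ 2)
      (g := fun ω => (2 * c) * W ω) hW2 (hW.const_mul (2*c))
    have e4 := integral_const_mul (μ := μ) (2 * c) W
    have e5 : ∫ (_ : Ω), c ^ 2 ∂μ = c ^ 2 := by simp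
    rw [e1, e2, e3, e4, e5, ← hc]
    ring
  linarith [h0, hexp.le]

private lemma poly_lower' (ν t s B : ℝ) (hcase : ν = 1 ∨ 2 ≤ ν)
    (ht : |t| ≤ B) (hs : |s| ≤ B) :
    ν^3 * t^2 - ν * (s + (ν-1)*t)^2 ≤ (6*ν^2 - 11*ν + 6) * B^2 := by
  obtain ⟨ht1, ht2⟩ := abs_le.1 ht
  obtain ⟨hs1, hs2⟩ := abs_le.1 hs
  have hB0 : 0 ≤ B := le_trans (abs_nonneg t) ht
  rcases hcase with h1 | h2
  · subst h1; nlinarith [sq_nonneg (t+s), sq_nonneg (t-s), sq_nonneg (B+t), sq_nonneg (B-t)]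
  · have hν0 : (0:ℝ) < ν := by linarith
    have hn2 : (0:ℝ) ≤ ν - 2 := by linarith
    have hB2t2 : 0 ≤ B^2 - t^2 := by nlinarith
    have hts1 : 0 ≤ B^2 + t*s := by nlinarith
    nlinarith [mul_nonneg (mul_nonneg hν0.le hn2) hB2t2,
      mul_nonneg (mul_nonneg hν0.le hn2) hts1,
      mul_nonneg hν0.le hB2t2,
      mul_nonneg hν0.le (sq_nonneg (s+t)),
      mul_nonneg (mul_nonneg hn2 (by linarith : (0:ℝ) ≤ 2*ν-3)) (sq_nonneg B)]

private lemma poly_upper' (ν t B : ℝ) (hν : 1 ≤ ν) :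
    ν^4*B^2 + (t^2 - B^2) * (ν*(ν-1)*(ν-2)*(ν-3)) - t^2*ν^4
      ≤ (6*ν^2 - 11*ν + 6) * B^2 * ν := by
  have hpos : 0 ≤ 6*ν^3 - 11*ν^2 + 6*ν := by nlinarith [sq_nonneg (ν-1), sq_nonneg ν]
  nlinarith [mul_nonneg (sq_nonneg t) hpos]

/-- Second-moment bias of the V-statistic `T̂_0 = (1/n²)Σ_{i,j} f(X_i,Y_j)`
for i.i.d. pairs `(X_i,Y_i) ∼ P_{XY}` and `f` bounded by `B`:
`|E[T̂_0²] − T_0²| ≤ (6/n − 11/n² + 6/n³) B²`, where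
`T_0 = E_{P_X×P_Y} f(X,Y)`. -/
theorem vstatistic_T0_sq_bias
    {X Y Ω : Type*} [MeasurableSpace X] [MeasurableSpace Y] [MeasurableSpace Ω]
    (μ : Measure Ω) [IsProbabilityMeasure μ]
    (PXY : Measure (X × Y)) [IsProbabilityMeasure PXY]
    (n : ℕ) (hn : 0 < n)
    (V : Fin n → Ω → X × Y)
    (hmeas : ∀ i, Measurable (V i))
    (hindep : iIndepFun V μ)
    (hid : ∀ i, Measure.map (V i) μ = PXY)
    (f : X × Y → ℝ) (hf : Measurable f)
    (B : ℝ) (hB : ∀ z, |f z| ≤ B) :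
    |(∫ ω, ((1 / (n : ℝ) ^ 2) * ∑ i, ∑ j, f ((V i ω).1, (V j ω).2)) ^ 2 ∂μ)
        - (∫ z, f z ∂((PXY.map Prod.fst).prod (PXY.map Prod.snd))) ^ 2|
      ≤ (6 / (n : ℝ) - 11 / (n : ℝ) ^ 2 + 6 / (n : ℝ) ^ 3) * B ^ 2 := by
  classical
  have hν1 : (1:ℝ) ≤ (n:ℝ) := by exact_mod_cast hn
  have hν0 : (0:ℝ) < (n:ℝ) := by linarith
  -- nonemptiness and B ≥ 0
  have hne : Nonempty (X × Y) := by
    rcases isEmpty_or_nonempty (X × Y) with hE | hNE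
    · exfalso
      have h1 : PXY Set.univ = 1 := measure_univ
      rw [Set.univ_eq_empty_iff.2 hE] at h1
      simp at h1
    · exact hNE
  obtain ⟨z0⟩ := hne
  have hB0 : 0 ≤ B := le_trans (abs_nonneg _) (hB z0)
  -- abbreviations
  set t := ∫ z, f z ∂((PXY.map Prod.fst).prod (PXY.map Prod.snd)) with htdef
  set sm := ∫ z, f z ∂PXY with hsdef
  -- measurability and integrability of the summands
  have hgm : ∀ i j : Fin n, Measurable (fun ω => f ((V i ω).1, (V j ω).2)) := fun i j =>
    hf.comp ((measurable_fst.comp (hmeas i)).prodMk (measurable_snd.comp (hmeas j)))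
  have hgb : ∀ (i j : Fin n) (ω : Ω), ‖f ((V i ω).1, (V j ω).2)‖ ≤ B := fun i j ω => by
    rw [Real.norm_eq_abs]; exact hB _
  have hgint : ∀ i j : Fin n, Integrable (fun ω => f ((V i ω).1, (V j ω).2)) μ := fun i j =>
    ⟨(hgm i j).aestronglyMeasurable,
      HasFiniteIntegral.of_bounded (C := B) (Filter.Eventually.of_forall (hgb i j))⟩
  have hggb : ∀ (i j q r : Fin n) (ω : Ω),
      ‖f ((V i ω).1, (V j ω).2) * f ((V q ω).1, (V r ω).2)‖ ≤ B * B := fun i j q r ω => by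
    rw [norm_mul]
    exact mul_le_mul (hgb i j ω) (hgb q r ω) (norm_nonneg _) hB0
  have hggint : ∀ i j q r : Fin n,
      Integrable (fun ω => f ((V i ω).1, (V j ω).2) * f ((V q ω).1, (V r ω).2)) μ :=
    fun i j q r =>
    ⟨((hgm i j).mul (hgm q r)).aestronglyMeasurable,
      HasFiniteIntegral.of_bounded (C := B * B) (Filter.Eventually.of_forall (hggb i j q r))⟩
  -- per-pair expectations
  have he : ∀ i j : Fin n, ∫ ω, f ((V i ω).1, (V j ω).2) ∂μ = if i = j then sm else t := by
    intro i j
    by_cases hij : i = j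
    · subst hij
      rw [if_pos rfl, hsdef]
      have h : (fun ω => f ((V i ω).1, (V i ω).2)) = fun ω => f (V i ω) := by
        funext ω; rfl
      rw [h, ← integral_map (hmeas i).aemeasurable hf.aestronglyMeasurable, hid i]
    · rw [if_neg hij, htdef]
      have hind : IndepFun (V i) (V j) μ := hindep.indepFun hij
      have hmap : μ.map (fun ω => (V i ω, V j ω)) = PXY.prod PXY := by
        rw [(indepFun_iff_map_prod_eq_prod_map_map (hmeas i).aemeasurable
          (hmeas j).aemeasurable).1 hind, hid i, hid j]
      have hφ : Measurable (fun p : (X × Y) × (X × Y) => f (p.1.1, p.2.2)) :=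
        hf.comp ((measurable_fst.comp measurable_fst).prodMk
          (measurable_snd.comp measurable_snd))
      calc ∫ ω, f ((V i ω).1, (V j ω).2) ∂μ
          = ∫ p : (X × Y) × (X × Y), f (p.1.1, p.2.2)
              ∂(μ.map (fun ω => (V i ω, V j ω))) := by
            rw [integral_map ((hmeas i).prodMk (hmeas j)).aemeasurable
              hφ.aestronglyMeasurable]
        _ = ∫ p : (X × Y) × (X × Y), f (p.1.1, p.2.2) ∂(PXY.prod PXY) := by rw [hmap]
        _ = ∫ z, f z ∂((PXY.map Prod.fst).prod (PXY.map Prod.snd)) := by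
            rw [Measure.map_prod_map _ _ measurable_fst measurable_snd]
            rw [integral_map (measurable_fst.prodMap measurable_snd).aemeasurable
              hf.aestronglyMeasurable]
            rfl
  -- bounds on t and sm
  haveI hP1 : IsProbabilityMeasure (PXY.map Prod.fst) :=
    Measure.isProbabilityMeasure_map measurable_fst.aemeasurable
  haveI hP2 : IsProbabilityMeasure (PXY.map Prod.snd) :=
    Measure.isProbabilityMeasure_map measurable_snd.aemeasurable
  have habs : ∀ {α : Type _} [MeasurableSpace α] (P : Measure α) [IsProbabilityMeasure P]
      (g : α → ℝ), (∀ a, ‖g a‖ ≤ B) → |∫ a, g a ∂P| ≤ B := by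
    intro α _ P _ g hg
    rw [← Real.norm_eq_abs]
    have h := norm_integral_le_of_norm_le_const (μ := P) (f := g) (C := B)
      (Filter.Eventually.of_forall hg)
    simpa [measure_univ] using h
  have htB : |t| ≤ B := by
    rw [htdef]
    exact habs _ f fun z => by rw [Real.norm_eq_abs]; exact hB z
  have hsB : |sm| ≤ B := by
    rw [hsdef]
    exact habs _ f fun z => by rw [Real.norm_eq_abs]; exact hB z
  -- bound each product expectation
  have haB : ∀ i j q r : Fin n,
      ∫ ω, f ((V i ω).1, (V j ω).2) * f ((V q ω).1, (V r ω).2) ∂μ ≤ B ^ 2 := by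
    intro i j q r
    have h := norm_integral_le_of_norm_le_const (μ := μ)
      (f := fun ω => f ((V i ω).1, (V j ω).2) * f ((V q ω).1, (V r ω).2)) (C := B * B)
      (Filter.Eventually.of_forall (hggb i j q r))
    simp only [probReal_univ, mul_one] at h
    calc ∫ ω, f ((V i ω).1, (V j ω).2) * f ((V q ω).1, (V r ω).2) ∂μ
        ≤ ‖∫ ω, f ((V i ω).1, (V j ω).2) * f ((V q ω).1, (V r ω).2) ∂μ‖ :=
          Real.le_norm_self _
      _ ≤ B * B := h
      _ = B ^ 2 := by ring
  -- factorization for disjoint index pairs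
  have ha_disj : ∀ i j q r : Fin n, i ≠ q → i ≠ r → j ≠ q → j ≠ r →
      ∫ ω, f ((V i ω).1, (V j ω).2) * f ((V q ω).1, (V r ω).2) ∂μ
        = (if i = j then sm else t) * (if q = r then sm else t) := by
    intro i j q r h1 h2 h3 h4
    have hpair := hindep.indepFun_prodMk_prodMk hmeas i j q r h1 h2 h3 h4
    have hφ : Measurable (fun p : (X × Y) × (X × Y) => f (p.1.1, p.2.2)) :=
      hf.comp ((measurable_fst.comp measurable_fst).prodMk
        (measurable_snd.comp measurable_snd))
    have hI : IndepFun (fun ω => f ((V i ω).1, (V j ω).2))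
        (fun ω => f ((V q ω).1, (V r ω).2)) μ := hpair.comp hφ hφ
    have hmul : ∫ ω, f ((V i ω).1, (V j ω).2) * f ((V q ω).1, (V r ω).2) ∂μ
        = (∫ ω, f ((V i ω).1, (V j ω).2) ∂μ) * ∫ ω, f ((V q ω).1, (V r ω).2) ∂μ :=
      hI.integral_mul_eq_mul_integral (hgint i j).1 (hgint q r).1
    rw [he i j, he q r] at hmul
    exact hmul
  -- expectation of W
  have hrow : ∀ i : Fin n, ∑ j : Fin n, (if i = j then sm else t)
      = sm + ((n:ℝ)-1)*t := by
    intro i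
    have hone : ∑ j : Fin n, (if i = j then sm - t else 0) = sm - t := by
      rw [Finset.sum_ite_eq]; simp
    calc ∑ j : Fin n, (if i = j then sm else t)
        = ∑ j : Fin n, (t + (if i = j then sm - t else 0)) := by
          refine Finset.sum_congr rfl fun j _ => ?_; split_ifs <;> ring
      _ = (n:ℝ) * t + (sm - t) := by
          rw [Finset.sum_add_distrib, Finset.sum_const, hone, Finset.card_univ,
            Fintype.card_fin, nsmul_eq_mul]
      _ = sm + ((n:ℝ)-1)*t := by ring
  have hEW : ∫ ω, ((1 / (n:ℝ) ^ 2) * ∑ i, ∑ j, f ((V i ω).1, (V j ω).2)) ∂μ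
      = (sm + ((n:ℝ)-1)*t)/(n:ℝ) := by
    rw [integral_const_mul]
    rw [integral_finset_sum _ fun i _ => integrable_finset_sum _ fun j _ => hgint i j]
    have hin : ∀ i : Fin n, (∫ ω, ∑ j, f ((V i ω).1, (V j ω).2) ∂μ)
        = sm + ((n:ℝ)-1)*t := by
      intro i
      rw [integral_finset_sum _ fun j _ => hgint i j,
        Finset.sum_congr rfl fun j _ => he i j, hrow i]
    rw [Finset.sum_congr rfl fun i _ => hin i, Finset.sum_const, Finset.card_univ,
      Fintype.card_fin, nsmul_eq_mul]
    field_simp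
  -- expectation of W², expanded
  have hEW2 : ∫ ω, ((1 / (n:ℝ) ^ 2) * ∑ i, ∑ j, f ((V i ω).1, (V j ω).2)) ^ 2 ∂μ
      = (1/(n:ℝ)^4) * ∑ i : Fin n, ∑ j : Fin n, ∑ q : Fin n, ∑ r : Fin n,
          ∫ ω, f ((V i ω).1, (V j ω).2) * f ((V q ω).1, (V r ω).2) ∂μ := by
    have hpt : ∀ ω : Ω, ((1 / (n:ℝ) ^ 2) * ∑ i, ∑ j, f ((V i ω).1, (V j ω).2)) ^ 2
        = (1/(n:ℝ)^4) * ∑ i : Fin n, ∑ j : Fin n, ∑ q : Fin n, ∑ r : Fin n,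
            f ((V i ω).1, (V j ω).2) * f ((V q ω).1, (V r ω).2) := by
      intro ω
      have hs2 : (∑ i, ∑ j, f ((V i ω).1, (V j ω).2)) ^ 2
          = ∑ i : Fin n, ∑ j : Fin n, ∑ q : Fin n, ∑ r : Fin n,
              f ((V i ω).1, (V j ω).2) * f ((V q ω).1, (V r ω).2) := by
        rw [sq, Finset.sum_mul_sum]
        refine Finset.sum_congr rfl fun i _ => ?_
        rw [← Finset.sum_comm]
        refine Finset.sum_congr rfl fun j _ => ?_
        rw [Finset.sum_mul_sum]
      rw [mul_pow, hs2]
      congr 1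
      ring
    simp only [hpt]
    rw [integral_const_mul]
    congr 1
    rw [integral_finset_sum _ fun i _ => integrable_finset_sum _ fun j _ =>
      integrable_finset_sum _ fun q _ => integrable_finset_sum _ fun r _ => hggint i j q r]
    refine Finset.sum_congr rfl fun i _ => ?_
    rw [integral_finset_sum _ fun j _ => integrable_finset_sum _ fun q _ =>
      integrable_finset_sum _ fun r _ => hggint i j q r]
    refine Finset.sum_congr rfl fun j _ => ?_
    rw [integral_finset_sum _ fun q _ => integrable_finset_sum _ fun r _ => hggint i j q r]
    refine Finset.sum_congr rfl fun q _ => ?_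
    rw [integral_finset_sum _ fun r _ => hggint i j q r]
  -- upper bound on E[W²]
  have hub : ∫ ω, ((1 / (n:ℝ) ^ 2) * ∑ i, ∑ j, f ((V i ω).1, (V j ω).2)) ^ 2 ∂μ
      ≤ (1/(n:ℝ)^4) * (((n:ℝ)*((n:ℝ)-1)*((n:ℝ)-2)*((n:ℝ)-3)) * t^2
          + ((n:ℝ)^4 - (n:ℝ)*((n:ℝ)-1)*((n:ℝ)-2)*((n:ℝ)-3)) * B^2) := by
    rw [hEW2]
    refine mul_le_mul_of_nonneg_left ?_ (by positivity)
    rw [← quad_count' n (t^2) (B^2)]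
    refine Finset.sum_le_sum fun i _ => Finset.sum_le_sum fun j _ =>
      Finset.sum_le_sum fun q _ => Finset.sum_le_sum fun r _ => ?_
    by_cases hD : i ≠ j ∧ q ≠ i ∧ q ≠ j ∧ r ≠ i ∧ r ≠ j ∧ r ≠ q
    · rw [if_pos hD]
      obtain ⟨hij, hqi, hqj, hri, hrj, hrq⟩ := hD
      rw [ha_disj i j q r hqi.symm hri.symm hqj.symm hrj.symm,
        if_neg hij, if_neg (Ne.symm hrq)]
      rw [sq]
    · rw [if_neg hD]
      exact haB i j q r
  -- lower bound on E[W²] via Jensen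
  have hWm : Measurable (fun ω => (1 / (n:ℝ) ^ 2) * ∑ i, ∑ j, f ((V i ω).1, (V j ω).2)) :=
    (Finset.measurable_sum _ fun i _ => Finset.measurable_sum _ fun j _ => hgm i j).const_mul _
  have hWb : ∀ ω : Ω, ‖(1 / (n:ℝ) ^ 2) * ∑ i, ∑ j, f ((V i ω).1, (V j ω).2)‖ ≤ B := by
    intro ω
    have hS : ‖∑ i, ∑ j, f ((V i ω).1, (V j ω).2)‖ ≤ (n:ℝ)^2 * B := by
      calc ‖∑ i, ∑ j, f ((V i ω).1, (V j ω).2)‖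
          ≤ ∑ i : Fin n, ‖∑ j, f ((V i ω).1, (V j ω).2)‖ := norm_sum_le _ _
        _ ≤ ∑ i : Fin n, ∑ j : Fin n, ‖f ((V i ω).1, (V j ω).2)‖ :=
            Finset.sum_le_sum fun i _ => norm_sum_le _ _
        _ ≤ ∑ _i : Fin n, ∑ _j : Fin n, B :=
            Finset.sum_le_sum fun i _ => Finset.sum_le_sum fun j _ => hgb i j ω
        _ = (n:ℝ)^2 * B := by
            simp only [Finset.sum_const, Finset.card_univ, Fintype.card_fin, nsmul_eq_mul]
            ring
    calc ‖(1 / (n:ℝ) ^ 2) * ∑ i, ∑ j, f ((V i ω).1, (V j ω).2)‖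
        = (1 / (n:ℝ) ^ 2) * ‖∑ i, ∑ j, f ((V i ω).1, (V j ω).2)‖ := by
          rw [norm_mul, Real.norm_of_nonneg (by positivity)]
      _ ≤ (1 / (n:ℝ) ^ 2) * ((n:ℝ)^2 * B) := by
          exact mul_le_mul_of_nonneg_left hS (by positivity)
      _ = B := by field_simp
  have hWint : Integrable (fun ω => (1 / (n:ℝ) ^ 2) * ∑ i, ∑ j, f ((V i ω).1, (V j ω).2)) μ :=
    ⟨hWm.aestronglyMeasurable,
      HasFiniteIntegral.of_bounded (C := B) (Filter.Eventually.of_forall hWb)⟩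
  have hW2int : Integrable
      (fun ω => ((1 / (n:ℝ) ^ 2) * ∑ i, ∑ j, f ((V i ω).1, (V j ω).2)) ^ 2) μ := by
    refine ⟨(hWm.pow_const 2).aestronglyMeasurable,
      HasFiniteIntegral.of_bounded (C := B ^ 2) (Filter.Eventually.of_forall fun ω => ?_)⟩
    rw [norm_pow]
    exact pow_le_pow_left₀ (norm_nonneg _) (hWb ω) 2
  have hlb : ((sm + ((n:ℝ)-1)*t)/(n:ℝ)) ^ 2
      ≤ ∫ ω, ((1 / (n:ℝ) ^ 2) * ∑ i, ∑ j, f ((V i ω).1, (V j ω).2)) ^ 2 ∂μ := by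
    rw [← hEW]
    exact sq_integral_le' μ _ hWint hW2int
  -- final algebra
  have hcase : (n:ℝ) = 1 ∨ 2 ≤ (n:ℝ) := by
    rcases Nat.lt_or_ge n 2 with h | h
    · left
      have : n = 1 := by omega
      rw [this]; norm_num
    · right; exact_mod_cast h
  rw [abs_le]
  constructor
  · -- lower side
    have key := poly_lower' (n:ℝ) t sm B hcase htB hsB
    have hν2 : (0:ℝ) < (n:ℝ)^2 := by positivity
    have hν3 : (0:ℝ) < (n:ℝ)^3 := by positivity
    have e : (6/(n:ℝ) - 11/(n:ℝ)^2 + 6/(n:ℝ)^3) * B^2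
        = ((6*(n:ℝ)^2 - 11*(n:ℝ) + 6)*B^2)/(n:ℝ)^3 := by
      field_simp
    have hstep : t^2 - ((sm + ((n:ℝ)-1)*t)/(n:ℝ))^2
        ≤ (6/(n:ℝ) - 11/(n:ℝ)^2 + 6/(n:ℝ)^3) * B^2 := by
      rw [e, div_pow]
      have e2 : t^2 - (sm + ((n:ℝ)-1)*t)^2/(n:ℝ)^2
          = (t^2*(n:ℝ)^2 - (sm + ((n:ℝ)-1)*t)^2)/(n:ℝ)^2 := by
        field_simp
      rw [e2, div_le_div_iff₀ hν2 hν3]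
      nlinarith [mul_le_mul_of_nonneg_left key (sq_nonneg (n:ℝ))]
    linarith [hlb, hstep]
  · -- upper side
    have key := poly_upper' (n:ℝ) t B hν1
    have hν4 : (0:ℝ) < (n:ℝ)^4 := by positivity
    have e : (6/(n:ℝ) - 11/(n:ℝ)^2 + 6/(n:ℝ)^3) * B^2
        = ((6*(n:ℝ)^2 - 11*(n:ℝ) + 6)*B^2*(n:ℝ))/(n:ℝ)^4 := by
      field_simp
    have hstep : (1/(n:ℝ)^4) * (((n:ℝ)*((n:ℝ)-1)*((n:ℝ)-2)*((n:ℝ)-3)) * t^2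
          + ((n:ℝ)^4 - (n:ℝ)*((n:ℝ)-1)*((n:ℝ)-2)*((n:ℝ)-3)) * B^2) - t^2
        ≤ (6/(n:ℝ) - 11/(n:ℝ)^2 + 6/(n:ℝ)^3) * B^2 := by
      rw [e]
      have e2 : (1/(n:ℝ)^4) * (((n:ℝ)*((n:ℝ)-1)*((n:ℝ)-2)*((n:ℝ)-3)) * t^2
            + ((n:ℝ)^4 - (n:ℝ)*((n:ℝ)-1)*((n:ℝ)-2)*((n:ℝ)-3)) * B^2) - t^2
          = ((((n:ℝ)*((n:ℝ)-1)*((n:ℝ)-2)*((n:ℝ)-3)) * t^2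
            + ((n:ℝ)^4 - (n:ℝ)*((n:ℝ)-1)*((n:ℝ)-2)*((n:ℝ)-3)) * B^2) - t^2*(n:ℝ)^4)
              /(n:ℝ)^4 := by
        field_simp
      rw [e2, div_le_div_iff_of_pos_right hν4]
      linarith [key]
    linarith [hub, hstep]
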